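/- Mirror-conservatism does not imply conservatism: the random variable p that equals 1 with probability 0.9 and 0 with probability 0.1 is mirror-conservative but not conservative, i.e., there exists a ∈ [0,1] with P(p ≤ a) > a. -/

import Mathlib

open MeasureTheory

/-- Mirror-conservatism does not imply conservatism: `p = 1` w.p. `0.9` and
`p = 0` w.p. `0.1` is mirror-conservative but not conservative. -/
theorem mirror_conservative_not_conservative
    {Ω : Type*} [MeasurableSpace Ω] (μ : Measure Ω) [IsProbabilityMeasure μ]
    (p : Ω → ℝ) (hp : Measurable p)
    (hval : ∀ ω, p ω = 0 ∨ p ω = 1)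
    (h1 : μ {ω | p ω = 1} = ENNReal.ofReal 0.9)
    (h0 : μ {ω | p ω = 0} = ENNReal.ofReal 0.1) :
    (∀ a₁ a₂ : ℝ, 0 ≤ a₁ → a₁ ≤ a₂ → a₂ ≤ 0.5 →
      μ {ω | p ω ∈ Set.Icc a₁ a₂} ≤ μ {ω | p ω ∈ Set.Icc (1 - a₂) (1 - a₁)}) ∧
    (∃ a ∈ Set.Icc (0 : ℝ) 1, ENNReal.ofReal a < μ {ω | p ω ≤ a}) := by
  constructor
  · intro a₁ a₂ h0a h12 h25
    rcases eq_or_lt_of_le h0a with h | h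
    · -- a₁ = 0 : left set ⊆ {p = 0}, right set ⊇ {p = 1}
      have hL : {ω | p ω ∈ Set.Icc a₁ a₂} ⊆ {ω | p ω = 0} := by
        intro ω hω
        rcases hval ω with h0' | h1'
        · exact h0'
        · exfalso
          have := hω.2
          rw [h1'] at this
          linarith
      have hR : {ω | p ω = 1} ⊆ {ω | p ω ∈ Set.Icc (1 - a₂) (1 - a₁)} := by
        intro ω hω
        simp only [Set.mem_setOf_eq] at hω ⊢
        rw [hω]
        constructor <;> [linarith; linarith]
      calc μ {ω | p ω ∈ Set.Icc a₁ a₂} ≤ μ {ω | p ω = 0} := measure_mono hL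
        _ ≤ μ {ω | p ω = 1} := by
            rw [h0, h1]
            exact ENNReal.ofReal_le_ofReal (by norm_num)
        _ ≤ _ := measure_mono hR
    · -- a₁ > 0 : left set empty
      have hL : {ω | p ω ∈ Set.Icc a₁ a₂} = ∅ := by
        ext ω
        simp only [Set.mem_setOf_eq, Set.mem_empty_iff_false, iff_false]
        intro hω
        rcases hval ω with h0' | h1'
        · rw [h0'] at hω; linarith [hω.1]
        · rw [h1'] at hω; linarith [hω.2]
      rw [hL, measure_empty]
      exact zero_le
  · refine ⟨0, by simp, ?_⟩
    have hS : {ω | p ω = 0} ⊆ {ω | p ω ≤ 0} := fun ω hω => le_of_eq hω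
    have : ENNReal.ofReal 0.1 ≤ μ {ω | p ω ≤ 0} := h0 ▸ measure_mono hS
    calc ENNReal.ofReal 0 = 0 := by simp
      _ < ENNReal.ofReal 0.1 := by norm_num
      _ ≤ _ := this
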